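/- Let A be a real m×n matrix and c ∈ ℝ^m with c ≠ 0, and let Δ > 0, ζ ∈ (0,1). Suppose v* minimizes ‖A v + c‖ over the ball ‖v‖ ≤ ζΔ. Then ‖c‖ - ‖A v* + c‖ ≥ (‖Aᵀc‖ / (2‖c‖)) · min( ζΔ , ‖Aᵀc‖ / ‖AᵀA‖ ), where ‖AᵀA‖ denotes the operator 2-norm. -/

import Mathlib

set_option maxHeartbeats 1000000 in
set_option synthInstance.maxHeartbeats 100000 in
theorem stmt_2 (m n : ℕ)
    (A : EuclideanSpace ℝ (Fin n) →L[ℝ] EuclideanSpace ℝ (Fin m))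
    (c : EuclideanSpace ℝ (Fin m)) (hc : c ≠ 0)
    (Δ ζ : ℝ) (hΔ : 0 < Δ) (hζ : ζ ∈ Set.Ioo (0:ℝ) 1)
    (v : EuclideanSpace ℝ (Fin n)) (hv : ‖v‖ ≤ ζ * Δ)
    (hopt : ∀ w : EuclideanSpace ℝ (Fin n), ‖w‖ ≤ ζ * Δ → ‖A v + c‖ ≤ ‖A w + c‖) :
    ‖c‖ - ‖A v + c‖ ≥
      ‖(ContinuousLinearMap.adjoint A) c‖ / (2 * ‖c‖) *
        min (ζ * Δ)
          (‖(ContinuousLinearMap.adjoint A) c‖ /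
            ‖(ContinuousLinearMap.adjoint A).comp A‖) := by
  obtain ⟨hζ0, hζ1⟩ := hζ
  have hζΔ : 0 < ζ * Δ := mul_pos hζ0 hΔ
  set g := (ContinuousLinearMap.adjoint A) c with hg_def
  have hc0 : 0 < ‖c‖ := norm_pos_iff.mpr hc
  -- v is at least as good as 0
  have hle : ‖A v + c‖ ≤ ‖c‖ := by
    have := hopt 0 (by simp [le_of_lt hζΔ])
    simpa using this
  rcases eq_or_ne g 0 with hg | hg
  · simp [hg, hle]
  · have hgn : 0 < ‖g‖ := norm_pos_iff.mpr hg
    set B := ‖(ContinuousLinearMap.adjoint A).comp A‖ with hB_def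
    -- ‖A g‖ ^ 2 bound and positivity of B
    have hAg_sq : (inner ℝ g (((ContinuousLinearMap.adjoint A).comp A) g) : ℝ) = ‖A g‖ ^ 2 := by
      rw [ContinuousLinearMap.comp_apply, ContinuousLinearMap.adjoint_inner_right,
        real_inner_self_eq_norm_sq]
    have hAg_le : ‖A g‖ ^ 2 ≤ B * ‖g‖ ^ 2 := by
      rw [← hAg_sq]
      calc (inner ℝ g (((ContinuousLinearMap.adjoint A).comp A) g) : ℝ)
          ≤ ‖g‖ * ‖((ContinuousLinearMap.adjoint A).comp A) g‖ := real_inner_le_norm _ _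
        _ ≤ ‖g‖ * (B * ‖g‖) :=
            mul_le_mul_of_nonneg_left
              (((ContinuousLinearMap.adjoint A).comp A).le_opNorm g) (norm_nonneg g)
        _ = B * ‖g‖ ^ 2 := by ring
    have hgsq : (inner ℝ c (A g) : ℝ) = ‖g‖ ^ 2 := by
      rw [← ContinuousLinearMap.adjoint_inner_left]
      show (inner ℝ g g : ℝ) = ‖g‖ ^ 2
      rw [real_inner_self_eq_norm_sq]
    have hAg0 : A g ≠ 0 := by
      intro h
      rw [h, inner_zero_right] at hgsq
      exact absurd hgsq.symm (by positivity)
    have hB : 0 < B := by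
      have h1 : 0 < ‖A g‖ ^ 2 := pow_pos (norm_pos_iff.mpr hAg0) 2
      nlinarith [sq_nonneg ‖g‖]
    -- the Cauchy step
    set t := min (ζ * Δ / ‖g‖) (1 / B) with ht_def
    have ht : 0 < t := lt_min (by positivity) (by positivity)
    have htg : t * ‖g‖ ≤ ζ * Δ := by
      have h := min_le_left (ζ * Δ / ‖g‖) (1 / B)
      rw [← ht_def, le_div_iff₀ hgn] at h
      linarith
    have htB : t ≤ 1 / B := min_le_right _ _
    set w : EuclideanSpace ℝ (Fin n) := (-t) • g with hw_def
    have hwnorm : ‖w‖ ≤ ζ * Δ := by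
      rw [hw_def, norm_smul, Real.norm_eq_abs, abs_neg, abs_of_pos ht]
      exact htg
    -- expand ‖A w + c‖ ^ 2
    have hinner : (inner ℝ (A g) c : ℝ) = ‖g‖ ^ 2 := by
      rw [← ContinuousLinearMap.adjoint_inner_right]
      show (inner ℝ g g : ℝ) = ‖g‖ ^ 2
      rw [real_inner_self_eq_norm_sq]
    have hexp : ‖A w + c‖ ^ 2 = ‖c‖ ^ 2 - 2 * t * ‖g‖ ^ 2 + t ^ 2 * ‖A g‖ ^ 2 := by
      have hAw : A w = (-t) • A g := by rw [hw_def, map_smul]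
      rw [hAw, norm_add_sq_real, norm_smul, real_inner_smul_left, hinner,
        Real.norm_eq_abs, abs_neg, abs_of_pos ht]
      ring
    -- quadratic bound
    have hquad : ‖A w + c‖ ^ 2 ≤ ‖c‖ ^ 2 - t * ‖g‖ ^ 2 := by
      rw [hexp]
      have htB' : t * B ≤ 1 := by
        rw [le_div_iff₀ hB] at htB; linarith
      have key : t ^ 2 * ‖A g‖ ^ 2 ≤ t * ‖g‖ ^ 2 := by
        calc t ^ 2 * ‖A g‖ ^ 2 ≤ t ^ 2 * (B * ‖g‖ ^ 2) :=
              mul_le_mul_of_nonneg_left hAg_le (sq_nonneg t)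
          _ = (t * B) * (t * ‖g‖ ^ 2) := by ring
          _ ≤ 1 * (t * ‖g‖ ^ 2) := mul_le_mul_of_nonneg_right htB' (by positivity)
          _ = t * ‖g‖ ^ 2 := one_mul _
      linarith
    -- t * ‖g‖^2 = ‖g‖ * min (ζΔ) (‖g‖/B)
    have htval : t * ‖g‖ ^ 2 = ‖g‖ * min (ζ * Δ) (‖g‖ / B) := by
      rcases le_total (ζ * Δ / ‖g‖) (1 / B) with h | h
      · have h' : ζ * Δ ≤ ‖g‖ / B := by
          rw [div_le_div_iff₀ hgn hB] at h
          rw [le_div_iff₀ hB]; linarith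
        rw [ht_def, min_eq_left h, min_eq_left h']
        field_simp
      · have h' : ‖g‖ / B ≤ ζ * Δ := by
          rw [div_le_div_iff₀ hB hgn] at h
          rw [div_le_iff₀ hB]; linarith
        rw [ht_def, min_eq_right h, min_eq_right h']
        field_simp
    -- combine
    have hmain : ‖A v + c‖ ^ 2 ≤ ‖c‖ ^ 2 - ‖g‖ * min (ζ * Δ) (‖g‖ / B) := by
      have h1 : ‖A v + c‖ ≤ ‖A w + c‖ := hopt w hwnorm
      have h2 : ‖A v + c‖ ^ 2 ≤ ‖A w + c‖ ^ 2 := pow_le_pow_left₀ (norm_nonneg _) h1 2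
      rw [← htval]
      linarith
    rw [ge_iff_le, div_mul_eq_mul_div, div_le_iff₀ (by positivity)]
    have hM : 0 ≤ min (ζ * Δ) (‖g‖ / B) := le_min hζΔ.le (by positivity)
    nlinarith [norm_nonneg (A v + c), hle, hmain]
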